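/- Let R be a field, G a finite group of order n with listing g_1, …, g_n, and u ∈ RG a zero-divisor with rank σ(u) = r. Let S = {g_{i_1}, …, g_{i_r}} ⊆ G be such that (s·u)_{s∈S} is R-linearly independent, W the R-span of S, and C = {xu : x ∈ W}. Let v̄_1, …, v̄_{n−r} be column vectors forming a basis of the right null space {x̄ ∈ R^n : σ(u)x̄ = 0}, and for each i let v_i ∈ RG be the unique element whose RG-matrix σ(v_i) has first column equal to v̄_i (i.e. the coefficient of g_j⁻¹g_1 in v_i is the j-th entry of v̄_i). Then for every y ∈ RG: y ∈ C if and only if y·v_i = 0 for all i = 1, …, n−r. -/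

import Mathlib

/-- The `RG`-matrix of an element `w` of the group ring `RG`, relative to a
listing `g : Fin n ≃ G` of the elements of `G`. -/
noncomputable def rgMatrix {R : Type*} [Semiring R] {G : Type*} [Group G] {n : ℕ}
    (g : Fin n ≃ G) (w : MonoidAlgebra R G) : Matrix (Fin n) (Fin n) R :=
  Matrix.of fun i j => w.coeff ((g i)⁻¹ * g j)

lemma mulApplySum {R : Type*} [Semiring R] {G : Type*} [Group G] [Fintype G]
    (x w : MonoidAlgebra R G) (t : G) :
    (x * w).coeff t = ∑ h : G, x.coeff h * w.coeff (h⁻¹ * t) := by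
  classical
  rw [MonoidAlgebra.coeff_mul_apply_left, Finsupp.sum_fintype]
  intro a; simp

lemma rgMatrix_mul {R : Type*} [Semiring R] {G : Type*} [Group G] {n : ℕ} [Fintype G]
    (g : Fin n ≃ G) (x w : MonoidAlgebra R G) :
    rgMatrix g (x * w) = rgMatrix g x * rgMatrix g w := by
  ext i j
  rw [Matrix.mul_apply]
  show (x * w).coeff ((g i)⁻¹ * g j) = _
  rw [mulApplySum]
  refine (Fintype.sum_equiv (g.trans (Equiv.mulLeft (g i)⁻¹)) _ _ fun k => ?_).symm
  show rgMatrix g x i k * rgMatrix g w k j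
      = x.coeff ((g i)⁻¹ * g k) * w.coeff (((g i)⁻¹ * g k)⁻¹ * ((g i)⁻¹ * g j))
  have : ((g i)⁻¹ * g k)⁻¹ * ((g i)⁻¹ * g j) = (g k)⁻¹ * g j := by group
  rw [this]; rfl

/-- let `u` be a zero-divisor with `rank σ(u) = r`, `S ⊆ G` a set of `r`
group elements with `(s • u)_{s ∈ S}` linearly independent, `W` the span of `S` and
`C = {x * u : x ∈ W}`. Let `v̄_1, …, v̄_{n-r}` be a basis of the right null space
`{x̄ : σ(u) x̄ = 0}` and `v_i ∈ RG` the elements whose RG-matrices have first column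
`v̄_i`. Then `y ∈ C` iff `y * v_i = 0` for all `i`. -/
theorem stmt8 {R : Type*} [Field R] {G : Type*} [Group G] {n r : ℕ} [NeZero n]
    (g : Fin n ≃ G) (u : MonoidAlgebra R G)
    (hzd : ∃ w : MonoidAlgebra R G, w ≠ 0 ∧ u * w = 0)
    (hru : (rgMatrix g u).rank = r)
    (S : Finset G) (hcard : S.card = r)
    (hind : LinearIndependent R fun s : S => MonoidAlgebra.of R G (s : G) * u)
    (vb : Fin (n - r) → (Fin n → R))
    (hvb_indep : LinearIndependent R vb)
    (hvb_span : Submodule.span R (Set.range vb) = LinearMap.ker (rgMatrix g u).mulVecLin)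
    (v : Fin (n - r) → MonoidAlgebra R G)
    (hv : ∀ (i : Fin (n - r)) (j : Fin n), rgMatrix g (v i) j 0 = vb i j)
    (y : MonoidAlgebra R G) :
    (∃ x ∈ Submodule.span R (MonoidAlgebra.of R G '' (S : Set G)), y = x * u) ↔
      ∀ i, y * v i = 0 := by
  classical
  haveI : Fintype G := Fintype.ofEquiv (Fin n) g
  set A := rgMatrix g u with hA
  -- column-0 computation
  have hcol : ∀ (x w : MonoidAlgebra R G) (j : Fin n),
      rgMatrix g (x * w) j 0 = (rgMatrix g x).mulVec (fun k => rgMatrix g w k 0) j := by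
    intro x w j
    rw [rgMatrix_mul]
    simp [Matrix.mul_apply, Matrix.mulVec, dotProduct]
  -- column 0 determines the element
  have hinj : ∀ w : MonoidAlgebra R G, (∀ j, rgMatrix g w j 0 = 0) → w = 0 := by
    intro w hw
    ext h
    have h1 := hw (g.symm (g 0 * h⁻¹))
    have h2 : (g (g.symm (g 0 * h⁻¹)))⁻¹ * g 0 = h := by
      rw [Equiv.apply_symm_apply]; group
    simpa [rgMatrix, h2] using h1
  have hvbker : ∀ i, A.mulVec (vb i) = 0 := by
    intro i
    have : vb i ∈ LinearMap.ker A.mulVecLin := hvb_span ▸ Submodule.subset_span ⟨i, rfl⟩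
    simpa using this
  have hcolv : ∀ i : Fin (n - r), (fun k => rgMatrix g (v i) k 0) = vb i := by
    intro i; funext k; exact hv i k
  have huv : ∀ i, u * v i = 0 := by
    intro i
    apply hinj
    intro j
    rw [hcol, hcolv, ← hA, hvbker i]
    rfl
  constructor
  · rintro ⟨x, hx, rfl⟩ i
    rw [mul_assoc, huv i, mul_zero]
  · intro hy
    set Y := rgMatrix g y with hYdef
    have hYvb : ∀ i, Y.mulVec (vb i) = 0 := by
      intro i
      funext j
      have := hcol y (v i) j
      rw [hcolv, hy i] at this
      have h0 : rgMatrix (R := R) g 0 j 0 = 0 := by simp [rgMatrix]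
      rw [h0] at this
      exact this.symm
    have hker : LinearMap.ker A.mulVecLin ≤ LinearMap.ker Y.mulVecLin := by
      rw [← hvb_span, Submodule.span_le]
      rintro _ ⟨i, rfl⟩
      exact LinearMap.mem_ker.mpr (hYvb i)
    -- factor Y through A
    obtain ⟨φ, hφ⟩ := LinearMap.exists_extend
      (((LinearMap.ker A.mulVecLin).liftQ Y.mulVecLin hker).comp
        (A.mulVecLin.quotKerEquivRange.symm : LinearMap.range A.mulVecLin →ₗ[R] _))
    have hfac : ∀ x, φ (A.mulVec x) = Y.mulVec x := by
      intro x
      have h1 := LinearMap.congr_fun hφ ⟨A.mulVec x, LinearMap.mem_range_self A.mulVecLin x⟩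
      have h2 : A.mulVecLin.quotKerEquivRange.symm
          ⟨A.mulVec x, LinearMap.mem_range_self A.mulVecLin x⟩
          = Submodule.Quotient.mk x := by
        rw [LinearEquiv.symm_apply_eq]
        exact Subtype.ext (A.mulVecLin.quotKerEquivRange_apply_mk x)
      simpa [h2, Submodule.liftQ_apply] using h1
    set C := LinearMap.toMatrix' φ with hC
    have hCA : ∀ x, (C * A).mulVec x = Y.mulVec x := by
      intro x
      rw [← Matrix.mulVec_mulVec]
      have : C.mulVec (A.mulVec x) = φ (A.mulVec x) := by
        rw [← Matrix.toLin'_apply, hC, Matrix.toLin'_toMatrix']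
      rw [this, hfac]
    have hYrow : ∀ j, Y 0 j = ∑ k, C 0 k * A k j := by
      intro j
      have h1 := congrFun (hCA (Pi.single j 1)) 0
      simp only [Matrix.mulVec_single, MulOpposite.op_one, one_smul, Matrix.col_apply] at h1
      rw [← h1, Matrix.mul_apply]
    set z : MonoidAlgebra R G :=
      ∑ k : Fin n, C 0 k • (MonoidAlgebra.of R G ((g 0)⁻¹ * g k)) with hz
    have hyz : y = z * u := by
      ext h
      have hgj : g (g.symm (g 0 * h)) = g 0 * h := g.apply_symm_apply _
      have hyh : y.coeff h = Y 0 (g.symm (g 0 * h)) := by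
        show y.coeff h = y.coeff ((g 0)⁻¹ * g (g.symm (g 0 * h)))
        rw [hgj, inv_mul_cancel_left]
      have hzh : (z * u).coeff h = ∑ k, C 0 k * A k (g.symm (g 0 * h)) := by
        rw [hz, Finset.sum_mul, MonoidAlgebra.coeff_sum, Finsupp.finset_sum_apply]
        refine Finset.sum_congr rfl fun k _ => ?_
        rw [smul_mul_assoc, MonoidAlgebra.coeff_smul_apply, smul_eq_mul]
        congr 1
        show (MonoidAlgebra.single ((g 0)⁻¹ * g k) (1:R) * u).coeff h = _
        rw [MonoidAlgebra.coeff_single_mul_apply, one_mul]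
        show u.coeff (((g 0)⁻¹ * g k)⁻¹ * h) = u.coeff ((g k)⁻¹ * g (g.symm (g 0 * h)))
        rw [hgj]
        congr 1
        group
      rw [hyh, hYrow, hzh]
    -- dimension argument
    haveI : FiniteDimensional R (MonoidAlgebra R G) :=
      Module.Finite.equiv ((Finsupp.linearEquivFunOnFinite R R G).symm.trans (MonoidAlgebra.coeffLinearEquiv R).symm)
    set T : MonoidAlgebra R G →ₗ[R] MonoidAlgebra R G := LinearMap.mulRight R u with hT
    have hyT : y ∈ LinearMap.range T := ⟨z, hyz.symm⟩
    set ρ : MonoidAlgebra R G ≃ₗ[R] (Fin n → R) :=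
      (MonoidAlgebra.coeffLinearEquiv R).trans ((Finsupp.linearEquivFunOnFinite R R G).trans
        (LinearEquiv.funCongrLeft R R (g.trans (Equiv.mulLeft (g 0)⁻¹)))) with hρ
    have hρapp : ∀ (w : MonoidAlgebra R G) (j : Fin n), ρ w j = w.coeff ((g 0)⁻¹ * g j) := by
      intro w j; rfl
    have hρT : ∀ w : MonoidAlgebra R G, ρ (T w) = A.transpose.mulVecLin (ρ w) := by
      intro w
      funext j
      rw [hρapp]
      show rgMatrix g (w * u) 0 j = _
      rw [rgMatrix_mul, Matrix.mul_apply]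
      show _ = A.transpose.mulVec (ρ w) j
      rw [Matrix.mulVec]
      show _ = dotProduct (fun k => A k j) (ρ w)
      rw [dotProduct]
      refine Finset.sum_congr rfl fun k _ => ?_
      rw [hρapp, mul_comm]
      rfl
    have hmap : Submodule.map (ρ : MonoidAlgebra R G →ₗ[R] (Fin n → R)) (LinearMap.range T)
        = LinearMap.range A.transpose.mulVecLin := by
      apply le_antisymm
      · rintro _ ⟨_, ⟨w, rfl⟩, rfl⟩
        exact ⟨ρ w, (hρT w).symm⟩
      · rintro _ ⟨x, rfl⟩
        refine ⟨T (ρ.symm x), ⟨ρ.symm x, rfl⟩, ?_⟩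
        show ρ (T (ρ.symm x)) = A.transpose.mulVecLin x
        rw [hρT, LinearEquiv.apply_symm_apply]
    have hrankT : Module.finrank R (LinearMap.range T) = r := by
      have := LinearEquiv.finrank_map_eq ρ (LinearMap.range T)
      rw [hmap] at this
      rw [← this]
      show A.transpose.rank = r
      rw [Matrix.rank_transpose]
      exact hru
    set W := Submodule.span R (MonoidAlgebra.of R G '' (S : Set G)) with hW
    have hWmap : Submodule.map T W
        = Submodule.span R (Set.range fun s : S => MonoidAlgebra.of R G (s : G) * u) := by
      rw [hW, Submodule.map_span]
      congr 1
      rw [Set.image_image, Set.image_eq_range]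
      rfl
    have hfinW : Module.finrank R (Submodule.map T W) = r := by
      rw [hWmap, finrank_span_eq_card hind, Fintype.card_coe, hcard]
    have heq : Submodule.map T W = LinearMap.range T :=
      Submodule.eq_of_le_of_finrank_le (LinearMap.map_le_range)
        (by rw [hfinW, hrankT])
    rw [← heq] at hyT
    obtain ⟨x, hxW, hxy⟩ := hyT
    exact ⟨x, hxW, hxy.symm⟩
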